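/- arXiv:1308.3619 — 2 statements merged into one kernel-verified Lean document; each statement's English description precedes it below -/
import Mathlib

section
/- For every binary string β of length n with t ones and q ≥ 3, the expansion ε(β), obtained by replacing the t ones of β successively by the t symbols of each string of the Gray code G(t,q-1)⊕1 over {1,...,q-1}, is a Gray code list: consecutive strings of ε(β) have Hamming distance exactly 1. -/
/-- Hamming distance between two (equal-length) strings. -/
def hamming {α : Type*} [DecidableEq α] (u v : List α) : ℕ :=
  (List.zip u v).countP (fun p => decide (p.1 ≠ p.2))

/-- The generalized reflected Gray code over the alphabet `{0,...,q-1} ⊆ ℕ`. -/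
def grayN (q : ℕ) : ℕ → List (List ℕ)
  | 0 => [[]]
  | n+1 => ((List.range q).map (fun i =>
      (if i % 2 = 0 then grayN q n else (grayN q n).reverse).map (fun w => i :: w))).flatten

/-- Replace the ones of a binary string, from left to right, by the symbols of `x`
(zeros stay in place). -/
def place : List ℕ → List ℕ → List ℕ
  | [], _ => []
  | b :: β, x => if b = 0 then 0 :: place β x else x.headD 1 :: place β x.tail

/-- The expansion `ε(β)` of a binary string `β` for the alphabet `{0,...,q-1}`:
the `i`-th element replaces the ones of `β`, left to right, by the symbols of the
`i`-th string of `G(t,q-1) ⊕ 1` (the reflected Gray code over `{1,...,q-1}`). -/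
def expansion (q : ℕ) (β : List ℕ) : List (List ℕ) :=
  ((grayN (q-1) (β.count 1)).map (fun w => w.map (· + 1))).map (place β)

lemma hamming_cons {α : Type*} [DecidableEq α] (a b : α) (u v : List α) :
    hamming (a :: u) (b :: v) = hamming u v + (if a = b then 0 else 1) := by
  simp only [hamming, List.zip_cons_cons, List.countP_cons]
  by_cases h : a = b <;> simp [h]

lemma hamming_self {α : Type*} [DecidableEq α] (u : List α) : hamming u u = 0 := by
  induction u with
  | nil => rfl
  | cons a u ih => rw [hamming_cons, ih]; simp

lemma hamming_comm {α : Type*} [DecidableEq α] (u v : List α) : hamming u v = hamming v u := by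
  induction u generalizing v with
  | nil => cases v <;> rfl
  | cons a u ih =>
    cases v with
    | nil => rfl
    | cons b v => rw [hamming_cons, hamming_cons, ih]; by_cases h : a = b <;> simp [h, Ne.symm, eq_comm]

lemma hamming_map_add_one (u v : List ℕ) :
    hamming (u.map (· + 1)) (v.map (· + 1)) = hamming u v := by
  induction u generalizing v with
  | nil => cases v <;> rfl
  | cons a u ih =>
    cases v with
    | nil => rfl
    | cons b v => simp only [List.map_cons, hamming_cons, ih]; by_cases h : a = b <;> simp [h]

lemma gray_mem_length (q n : ℕ) : ∀ w ∈ grayN q n, w.length = n := by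
  induction n with
  | zero => simp [grayN]
  | succ n ih =>
    intro w hw
    simp only [grayN, List.mem_flatten, List.mem_map, List.mem_range] at hw
    obtain ⟨l, ⟨i, hi, rfl⟩, hwl⟩ := hw
    rw [List.mem_map] at hwl
    obtain ⟨w', hw', rfl⟩ := hwl
    split at hw'
    · simp [ih w' hw']
    · rw [List.mem_reverse] at hw'; simp [ih w' hw']

lemma gray_ne_nil (q n : ℕ) (hq : 1 ≤ q) : grayN q n ≠ [] := by
  induction n with
  | zero => simp [grayN]
  | succ n ih =>
    simp only [grayN, ne_eq, List.flatten_eq_nil_iff]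
    intro h
    have h0 := h ((grayN q n).map (fun w => (0:ℕ) :: w)) (by
      simp only [List.mem_map, List.mem_range]
      exact ⟨0, hq, by simp⟩)
    simp only [List.map_eq_nil_iff] at h0
    exact ih h0

lemma nil_not_mem_gray_blocks (q n : ℕ) (hq : 1 ≤ q) :
    [] ∉ (List.range q).map (fun i =>
      (if i % 2 = 0 then grayN q n else (grayN q n).reverse).map (fun w => i :: w)) := by
  simp only [List.mem_map, List.mem_range, not_exists, not_and]
  intro i hi h
  rw [List.map_eq_nil_iff] at h
  split at h
  · exact gray_ne_nil q n hq h
  · exact gray_ne_nil q n hq (by simpa using h)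

lemma gray_chain (q n : ℕ) (hq : 1 ≤ q) :
    List.Chain' (fun u v => hamming u v = 1) (grayN q n) := by
  induction n with
  | zero => simp [grayN]; exact List.isChain_singleton _
  | succ n ih =>
    unfold List.Chain' at ih ⊢
    rw [grayN, List.isChain_flatten (nil_not_mem_gray_blocks q n hq)]
    constructor
    · intro l hl
      simp only [List.mem_map, List.mem_range] at hl
      obtain ⟨i, hi, rfl⟩ := hl
      rw [List.isChain_map]
      have key : ∀ u v : List ℕ, hamming u v = 1 → hamming (i :: u) (i :: v) = 1 := by
        intro u v h; rw [hamming_cons, h]; simp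
      split
      · exact ih.imp (fun {u v} h => key u v h)
      · rw [List.isChain_reverse]
        exact ih.imp (fun {u v} h => key v u (by rw [hamming_comm]; exact h))
    · rw [List.isChain_map]
      obtain ⟨k, rfl⟩ := Nat.exists_eq_add_of_le hq
      rw [add_comm, List.isChain_range_succ]
      intro m hm x hx y hy
      rw [List.getLast?_map, Option.mem_map] at hx
      rw [List.head?_map, Option.mem_map] at hy
      obtain ⟨w, hw, rfl⟩ := hx
      obtain ⟨w', hw', rfl⟩ := hy
      have hww : w = w' := by
        rcases Nat.even_or_odd m with he | ho
        · have h1 : m % 2 = 0 := Nat.even_iff.mp he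
          have h2 : ¬ (m + 1) % 2 = 0 := by omega
          rw [if_pos h1] at hw
          rw [if_neg h2, List.head?_reverse] at hw'
          rw [hw'] at hw; exact (Option.some_inj.mp (Option.mem_def.mp hw)).symm
        · have h1 : ¬ m % 2 = 0 := by
            rcases Nat.odd_iff.mp ho with h; omega
          have h2 : (m + 1) % 2 = 0 := by omega
          rw [if_neg h1, List.getLast?_reverse] at hw
          rw [if_pos h2] at hw'
          rw [hw'] at hw; exact (Option.some_inj.mp (Option.mem_def.mp hw)).symm
      subst hww
      rw [hamming_cons, hamming_self]
      simp

lemma chain'_map_mem {α β : Type*} {R : α → α → Prop} {S : β → β → Prop} {f : α → β}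
    {l : List α} (h : List.Chain' R l)
    (H : ∀ a ∈ l, ∀ b ∈ l, R a b → S (f a) (f b)) : List.Chain' S (l.map f) := by
  induction l with
  | nil => exact List.isChain_nil
  | cons a l ih =>
    cases l with
    | nil => exact List.isChain_singleton _
    | cons b l' =>
      unfold List.Chain' at h ⊢
      rw [List.isChain_cons_cons] at h
      rw [List.map_cons, List.map_cons, List.isChain_cons_cons]
      refine ⟨H a (by simp) b (by simp) h.1, ?_⟩
      rw [← List.map_cons]
      exact ih h.2 (fun x hx y hy hr => H x (by simp only [List.mem_cons] at hx ⊢; tauto)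
        y (by simp only [List.mem_cons] at hy ⊢; tauto) hr)

lemma hamming_place (β : List ℕ) (hβ : ∀ b ∈ β, b ≤ 1) :
    ∀ x y : List ℕ, x.length = y.length →
    hamming (place β x) (place β y) = hamming (x.take (β.count 1)) (y.take (β.count 1)) := by
  induction β with
  | nil => intro x y _; simp [place, hamming]
  | cons b β ih =>
    intro x y hxy
    have hβ' : ∀ b ∈ β, b ≤ 1 := fun b hb => hβ b (by simp [hb])
    have hb := hβ b (by simp)
    interval_cases b
    · show hamming (0 :: place β x) (0 :: place β y) = _
      rw [hamming_cons, if_pos rfl, add_zero, ih hβ' x y hxy]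
      simp [List.count_cons]
    · show hamming (x.headD 1 :: place β x.tail) (y.headD 1 :: place β y.tail) = _
      have hc : (1 :: β).count 1 = β.count 1 + 1 := by simp [List.count_cons]
      rw [hc]
      cases x with
      | nil =>
        cases y with
        | nil =>
          rw [hamming_cons, if_pos rfl, add_zero]
          simpa using ih hβ' [] [] rfl
        | cons c y' => simp at hxy
      | cons a x' =>
        cases y with
        | nil => simp at hxy
        | cons c y' =>
          simp only [List.length_cons, Nat.add_right_cancel_iff] at hxy
          simp only [List.headD_cons, List.tail_cons, List.take_succ_cons]
          rw [hamming_cons, hamming_cons, ih hβ' x' y' hxy]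

/-- For `q ≥ 3` and a binary string `β`, the expansion `ε(β)` is a Gray code list:
consecutive strings of `ε(β)` have Hamming distance exactly `1`. -/
theorem stmt8 (q : ℕ) (hq : 3 ≤ q) (β : List ℕ) (hβ : ∀ b ∈ β, b ≤ 1) :
    List.Chain' (fun u v => hamming u v = 1) (expansion q β) := by
  unfold expansion
  rw [List.map_map]
  apply chain'_map_mem (gray_chain (q-1) (β.count 1) (by omega))
  intro w hw w' hw' h
  have l1 := gray_mem_length _ _ w hw
  have l2 := gray_mem_length _ _ w' hw'
  simp only [Function.comp]
  rw [hamming_place β hβ _ _ (by simp [l1, l2])]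
  rw [List.take_of_length_le (by simp [l1]), List.take_of_length_le (by simp [l2])]
  rw [hamming_map_add_one]
  exact h
end

section
/- Let q ≥ 2 be even and k ≥ 2, and let (α_1,...,α_N) be the binary Gray code list F(n,k) of binary strings of length n avoiding k consecutive 0's. Then the list ε(α_1) ∘ reverse(ε(α_2)) ∘ ε(α_3) ∘ ... (alternating, with the last expansion reversed iff N is even) is a Gray code list with Hamming distance 1 for the set of length-n strings over {0,...,q-1} avoiding k consecutive 0's. -/
/-- The binary reflected Gray code `C(n)` (strings over `{0,1} ⊆ ℕ`):
`C(0) = (λ)`, `C(n) = 1·reverse(C(n-1)) ∘ 0·C(n-1)`. -/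
def C : ℕ → List (List ℕ)
  | 0 => [[]]
  | n+1 => (C n).reverse.map (fun w => 1 :: w) ++ (C n).map (fun w => 0 :: w)

/-- The Gray code list `F(n,k)` of binary strings avoiding `k` consecutive `0`'s:
`F(n,k) = C(n)` for `n < k`, and for `n ≥ k`,
`F(n,k) = 1·reverse(F(n-1,k)) ∘ 01·reverse(F(n-2,k)) ∘ ⋯ ∘ 0^(k-1)1·reverse(F(n-k,k))`. -/
def F (k : ℕ) : ℕ → List (List ℕ)
  | n =>
    if h : n < k ∨ k = 0 then C n
    else ((List.range k).map (fun j =>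
      (F k (n - (j+1))).reverse.map (fun w => List.replicate j 0 ++ 1 :: w))).flatten
termination_by n => n
decreasing_by push_neg at h; omega

/-- Alternating concatenation of a list of blocks: the `i`-th block (0-indexed)
is reversed exactly when `i` is odd. -/
def alt {α : Type*} (Ls : List (List α)) : List α :=
  (Ls.zipIdx.map (fun p => if p.2 % 2 = 0 then p.1 else p.1.reverse)).flatten

/-- The list `ε(α_1) ∘ reverse(ε(α_2)) ∘ ε(α_3) ∘ ⋯` obtained from
`F(n,k) = (α_1,...,α_N)`. -/
def Feven (q k n : ℕ) : List (List ℕ) := alt ((F k n).map (expansion q))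

namespace GrayAux

@[simp] lemma hamming_nil_left {α : Type*} [DecidableEq α] (v : List α) :
    hamming [] v = 0 := by simp [hamming]

@[simp] lemma hamming_nil_right {α : Type*} [DecidableEq α] (u : List α) :
    hamming u [] = 0 := by cases u <;> simp [hamming]

lemma hamming_cons {α : Type*} [DecidableEq α] (a b : α) (u v : List α) :
    hamming (a :: u) (b :: v) = hamming u v + (if a = b then 0 else 1) := by
  by_cases h : a = b <;> simp [hamming, List.countP_cons, h]

@[simp] lemma hamming_self {α : Type*} [DecidableEq α] (u : List α) :
    hamming u u = 0 := by
  induction u with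
  | nil => simp
  | cons a u ih => simp [hamming_cons, ih]

lemma hamming_comm {α : Type*} [DecidableEq α] (u v : List α) :
    hamming u v = hamming v u := by
  induction u generalizing v with
  | nil => simp
  | cons a u ih =>
    cases v with
    | nil => simp
    | cons b v => simp [hamming_cons, ih, eq_comm]

lemma hamming_append_left {α : Type*} [DecidableEq α] (p u v : List α) :
    hamming (p ++ u) (p ++ v) = hamming u v := by
  induction p with
  | nil => simp
  | cons a p ih => simp [hamming_cons, ih]

lemma eq_of_hamming_eq_zero {α : Type*} [DecidableEq α] {u v : List α}
    (hl : u.length = v.length) (h : hamming u v = 0) : u = v := by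
  induction u generalizing v with
  | nil => cases v with
    | nil => rfl
    | cons b v => simp at hl
  | cons a u ih =>
    cases v with
    | nil => simp at hl
    | cons b v =>
      rw [hamming_cons] at h
      by_cases hab : a = b
      · subst hab
        simp at h hl
        rw [ih hl h]
      · simp [hab] at h

lemma hamming_map {α β : Type*} [DecidableEq α] [DecidableEq β] {f : α → β}
    {u v : List α} (hf : ∀ a ∈ u, ∀ b ∈ v, f a = f b → a = b) :
    hamming (u.map f) (v.map f) = hamming u v := by
  induction u generalizing v with
  | nil => simp
  | cons a u ih =>
    cases v with
    | nil => simp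
    | cons b v =>
      simp only [List.map_cons, hamming_cons]
      rw [ih (fun x hx y hy => hf x (by simp [hx]) y (by simp [hy]))]
      congr 1
      by_cases hab : a = b
      · simp [hab]
      · have : f a ≠ f b := fun h => hab (hf a (by simp) b (by simp) h)
        simp [hab, this]

/-! ### infix / replicate helpers -/

lemma not_rep_prefix (v : List ℕ) : ∀ j m, j < m →
    ¬ (List.replicate m 0 <+: List.replicate j 0 ++ 1 :: v) := by
  intro j
  induction j with
  | zero =>
    intro m hm h
    match m, hm with
    | m'+1, _ =>
      rw [List.replicate_succ, List.replicate_zero, List.nil_append,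
        List.cons_prefix_cons] at h
      exact absurd h.1 (by omega)
  | succ j ih =>
    intro m hm h
    match m, hm with
    | m'+1, hm =>
      rw [List.replicate_succ, List.replicate_succ (a := 0) (n := j), List.cons_append,
        List.cons_prefix_cons] at h
      exact ih m' (by omega) h.2

lemma avoid_block {k : ℕ} (hk : 1 ≤ k) (v : List ℕ) : ∀ j, j < k →
    ¬ (List.replicate k 0 <:+: v) →
    ¬ (List.replicate k 0 <:+: List.replicate j 0 ++ 1 :: v) := by
  intro j
  induction j with
  | zero =>
    intro _ hv h
    simp only [List.replicate_zero, List.nil_append] at h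
    rw [List.infix_cons_iff] at h
    rcases h with h | h
    · match k, hk with
      | k'+1, _ =>
        rw [List.replicate_succ, List.cons_prefix_cons] at h
        exact absurd h.1 (by omega)
    · exact hv h
  | succ j ih =>
    intro hj hv h
    rw [List.replicate_succ, List.cons_append, List.infix_cons_iff] at h
    rcases h with h | h
    · exact not_rep_prefix v (j+1) k hj h
    · exact ih (by omega) hv h



theorem two_step_induction {α : Type*} {P : List α → Prop} (h0 : P [])
    (h1 : ∀ a, P [a]) (h2 : ∀ a b l, P l → P (a :: b :: l)) : ∀ l, P l
  | [] => h0
  | [a] => h1 a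
  | a :: b :: l => h2 a b l (two_step_induction h0 h1 h2 l)

def altAux {α : Type*} (m : ℕ) (Ls : List (List α)) : List α :=
  ((Ls.zipIdx m).map (fun p => if p.2 % 2 = 0 then p.1 else p.1.reverse)).flatten

lemma altAux_nil {α : Type*} (m : ℕ) : altAux m ([] : List (List α)) = [] := rfl

lemma altAux_cons {α : Type*} (m : ℕ) (L : List α) (Ls : List (List α)) :
    altAux m (L :: Ls) = (if m % 2 = 0 then L else L.reverse) ++ altAux (m+1) Ls := by
  simp only [altAux, List.zipIdx_cons, List.map_cons, List.flatten_cons]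

lemma altAux_two {α : Type*} (m : ℕ) (Ls : List (List α)) :
    altAux (m+2) Ls = altAux m Ls := by
  induction Ls generalizing m with
  | nil => rfl
  | cons L Ls ih =>
    have h2 : (m+2) % 2 = m % 2 := by omega
    rw [altAux_cons, altAux_cons, ih, h2]

lemma alt_eq {α : Type*} (Ls : List (List α)) : alt Ls = altAux 0 Ls := rfl

@[simp] lemma alt_nil {α : Type*} : alt ([] : List (List α)) = [] := rfl

@[simp] lemma alt_singleton {α : Type*} (L : List α) : alt [L] = L := by
  rw [alt_eq, altAux_cons, altAux_nil]
  simp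

lemma alt_cons₂ {α : Type*} (L₁ L₂ : List α) (Ls : List (List α)) :
    alt (L₁ :: L₂ :: Ls) = L₁ ++ (L₂.reverse ++ alt Ls) := by
  rw [alt_eq, altAux_cons, altAux_cons, show (0:ℕ)+1+1 = 0+2 by rfl, altAux_two, ← alt_eq]
  simp

lemma mem_alt {α : Type*} {Ls : List (List α)} {x : α} :
    x ∈ alt Ls ↔ ∃ L ∈ Ls, x ∈ L := by
  induction Ls using two_step_induction with
  | h0 => simp
  | h1 L => simp
  | h2 L₁ L₂ Ls ih => simp [alt_cons₂, ih, or_assoc]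

lemma nodup_alt {α : Type*} {Ls : List (List α)} (h1 : ∀ L ∈ Ls, L.Nodup)
    (h2 : Ls.Pairwise List.Disjoint) : (alt Ls).Nodup := by
  induction Ls using two_step_induction with
  | h0 => simp
  | h1 L => simpa using h1 L (by simp)
  | h2 L₁ L₂ Ls ih =>
    rw [alt_cons₂, List.nodup_append, List.nodup_append]
    rw [List.pairwise_cons] at h2
    obtain ⟨hd1, h2⟩ := h2
    rw [List.pairwise_cons] at h2
    obtain ⟨hd2, h2⟩ := h2
    refine ⟨h1 L₁ (by simp), ⟨by simpa using h1 L₂ (by simp),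
      ih (fun L hL => h1 L (by simp [hL])) h2, ?_⟩, ?_⟩
    · rintro a ha _ hb rfl
      rw [mem_alt] at hb
      obtain ⟨L, hL, haL⟩ := hb
      exact hd2 L hL (by simpa using ha) haL
    · rintro a ha _ hb rfl
      rcases List.mem_append.mp hb with hb | hb
      · exact hd1 L₂ (by simp) ha (by simpa using hb)
      · rw [mem_alt] at hb
        obtain ⟨L, hL, haL⟩ := hb
        exact hd1 L (by simp [hL]) ha haL

lemma alt_head?_cons {α : Type*} (L : List α) (Ls : List (List α)) (h : L ≠ []) :
    (alt (L :: Ls)).head? = L.head? := by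
  cases Ls with
  | nil => simp
  | cons L₂ Ls =>
    rw [alt_cons₂]
    cases L with
    | nil => exact absurd rfl h
    | cons a L => simp

lemma chain'_alt {α : Type*} {R : α → α → Prop} (hsym : ∀ a b, R a b → R b a)
    {Ls : List (List α)}
    (hne : ∀ L ∈ Ls, L ≠ []) (hch : ∀ L ∈ Ls, List.IsChain R L)
    (hjun : Ls.IsChain (fun A B =>
      (∀ x ∈ A.getLast?, ∀ y ∈ B.getLast?, R x y) ∧
      (∀ x ∈ A.head?, ∀ y ∈ B.head?, R x y))) :
    List.IsChain R (alt Ls) := by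
  induction Ls using two_step_induction with
  | h0 => simp
  | h1 L => simpa using hch L (by simp)
  | h2 L₁ L₂ Ls ih =>
    obtain ⟨hJ12, hjun'⟩ := List.isChain_cons_cons.mp hjun
    rw [alt_cons₂, List.isChain_append, List.isChain_append]
    refine ⟨hch L₁ (by simp), ⟨?_, ?_, ?_⟩, ?_⟩
    · rw [List.isChain_reverse]
      exact (hch L₂ (by simp)).imp (fun a b h => hsym a b h)
    · exact ih (fun L hL => hne L (by simp [hL])) (fun L hL => hch L (by simp [hL]))
        hjun'.tail
    · intro x hx y hy
      rw [List.getLast?_reverse] at hx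
      cases Ls with
      | nil => simp at hy
      | cons L₃ Ls' =>
        rw [alt_head?_cons _ _ (hne L₃ (by simp))] at hy
        exact (List.isChain_cons_cons.mp hjun').1.2 x hx y hy
    · intro x hx y hy
      rw [List.head?_append_of_ne_nil _ (by simpa using hne L₂ (by simp)),
        List.head?_reverse] at hy
      exact hJ12.1 x hx y hy


/-! ### C lemmas -/

lemma C_ne_nil (n : ℕ) : C n ≠ [] := by
  induction n with
  | zero => simp [C]
  | succ n ih => simp [C, ih]

lemma mem_C {n : ℕ} {w : List ℕ} :
    w ∈ C n ↔ w.length = n ∧ ∀ b ∈ w, b < 2 := by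
  induction n generalizing w with
  | zero =>
    simp only [C, List.mem_singleton]
    constructor
    · rintro rfl; simp
    · rintro ⟨h, -⟩; exact List.length_eq_zero_iff.mp h
  | succ n ih =>
    simp only [C, List.mem_append, List.mem_map, List.mem_reverse]
    constructor
    · rintro (⟨v, hv, rfl⟩ | ⟨v, hv, rfl⟩) <;>
      · obtain ⟨h1, h2⟩ := ih.mp hv
        refine ⟨by simp [h1], ?_⟩
        intro b hb
        rcases List.mem_cons.mp hb with rfl | hb
        · omega
        · exact h2 b hb
    · rintro ⟨h1, h2⟩
      cases w with
      | nil => simp at h1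
      | cons b v =>
        have hb : b < 2 := h2 b (by simp)
        have hv : v ∈ C n := ih.mpr ⟨by simpa using h1, fun x hx => h2 x (by simp [hx])⟩
        interval_cases b
        · exact Or.inr ⟨v, hv, rfl⟩
        · exact Or.inl ⟨v, hv, rfl⟩

lemma C_nodup (n : ℕ) : (C n).Nodup := by
  induction n with
  | zero => simp [C]
  | succ n ih =>
    rw [C, List.nodup_append]
    refine ⟨(List.nodup_reverse.mpr ih).map List.cons_injective, ih.map List.cons_injective, ?_⟩
    rintro w hw _ hw' rfl
    simp only [List.mem_map, List.mem_reverse] at hw hw'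
    obtain ⟨v, -, rfl⟩ := hw
    obtain ⟨v', -, h⟩ := hw'
    simp at h

lemma C_getLast? (n : ℕ) : (C n).getLast? = some (List.replicate n 0) := by
  induction n with
  | zero => simp [C]
  | succ n ih =>
    rw [C, List.getLast?_append_of_ne_nil _ (by simp [C_ne_nil]),
      List.getLast?_map, ih]
    simp [List.replicate_succ]

lemma C_head?_succ (n : ℕ) : (C (n+1)).head? = some (1 :: List.replicate n 0) := by
  rw [C, List.head?_append_of_ne_nil _ (by simp [C_ne_nil]),
    List.head?_map, List.head?_reverse, C_getLast?]
  rfl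

lemma C_chain' (n : ℕ) : List.IsChain (fun u v => hamming u v = 1) (C n) := by
  induction n with
  | zero => simp [C]
  | succ n ih =>
    rw [C, List.isChain_append]
    refine ⟨?_, ?_, ?_⟩
    · rw [List.isChain_map, List.isChain_reverse]
      refine ih.imp (fun a b h => ?_)
      show hamming (1 :: b) (1 :: a) = 1
      rw [hamming_cons, hamming_comm]
      simpa using h
    · rw [List.isChain_map]
      refine ih.imp (fun a b h => ?_)
      show hamming (0 :: a) (0 :: b) = 1
      rw [hamming_cons]
      simpa using h
    · intro x hx y hy
      rw [List.getLast?_map, List.getLast?_reverse] at hx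
      rw [List.head?_map] at hy
      cases hh : (C n).head? with
      | none => simp [hh] at hx
      | some h =>
        rw [hh] at hx hy
        simp only [Option.map_some, Option.mem_def, Option.some_inj] at hx hy
        subst hx; subst hy
        rw [hamming_cons]
        simp

/-! ### grayN lemmas -/

lemma grayN_ne_nil {q : ℕ} (hq : 1 ≤ q) (n : ℕ) : grayN q n ≠ [] := by
  induction n with
  | zero => simp [grayN]
  | succ n ih =>
    obtain ⟨w, hw⟩ := List.exists_mem_of_ne_nil _ ih
    refine List.ne_nil_of_mem (a := (0 : ℕ) :: w) ?_
    rw [grayN, List.mem_flatten]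
    refine ⟨_, List.mem_map_of_mem (List.mem_range.mpr hq), ?_⟩
    simp only [Nat.zero_mod, if_pos rfl]
    exact List.mem_map_of_mem hw

lemma mem_ite_reverse {α : Type*} {c : Prop} [Decidable c] {L : List α} {x : α} :
    x ∈ (if c then L else L.reverse) ↔ x ∈ L := by
  split <;> simp

lemma mem_grayN {q n : ℕ} {w : List ℕ} :
    w ∈ grayN q n ↔ w.length = n ∧ ∀ b ∈ w, b < q := by
  induction n generalizing w with
  | zero =>
    simp only [grayN, List.mem_singleton]
    constructor
    · rintro rfl; simp
    · rintro ⟨h, -⟩; exact List.length_eq_zero_iff.mp h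
  | succ n ih =>
    rw [grayN]
    simp only [List.mem_flatten, List.mem_map, List.mem_range]
    constructor
    · rintro ⟨B, ⟨i, hi, rfl⟩, hw⟩
      simp only [List.mem_map] at hw
      obtain ⟨v, hv, rfl⟩ := hw
      rw [mem_ite_reverse] at hv
      obtain ⟨h1, h2⟩ := ih.mp hv
      refine ⟨by simp [h1], ?_⟩
      intro b hb
      rcases List.mem_cons.mp hb with rfl | hb
      · exact hi
      · exact h2 b hb
    · rintro ⟨h1, h2⟩
      cases w with
      | nil => simp at h1
      | cons b v =>
        have hb : b < q := h2 b (by simp)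
        have hv : v ∈ grayN q n :=
          ih.mpr ⟨by simpa using h1, fun x hx => h2 x (by simp [hx])⟩
        refine ⟨_, ⟨b, hb, rfl⟩, ?_⟩
        simp only [List.mem_map]
        exact ⟨v, mem_ite_reverse.mpr hv, rfl⟩

lemma grayN_nodup (q n : ℕ) : (grayN q n).Nodup := by
  induction n with
  | zero => simp [grayN]
  | succ n ih =>
    rw [grayN, List.nodup_flatten]
    constructor
    · rintro B hB
      simp only [List.mem_map] at hB
      obtain ⟨i, -, rfl⟩ := hB
      have : (if i % 2 = 0 then grayN q n else (grayN q n).reverse).Nodup := by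
        split <;> simp [ih]
      exact this.map List.cons_injective
    · rw [List.pairwise_map]
      refine (List.pairwise_lt_range (n := q)).imp_of_mem (fun {i j} _ _ hij => ?_)
      intro w hw hw'
      simp only [List.mem_map] at hw hw'
      obtain ⟨v, -, rfl⟩ := hw
      obtain ⟨v', -, h⟩ := hw'
      injection h with h1 h2
      omega

lemma grayN_head? {q : ℕ} (hq : 1 ≤ q) (n : ℕ) :
    (grayN q n).head? = some (List.replicate n 0) := by
  induction n with
  | zero => simp [grayN]
  | succ n ih =>
    obtain ⟨q', rfl⟩ : ∃ q', q = q' + 1 := ⟨q - 1, by omega⟩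
    rw [grayN, List.range_succ_eq_map, List.map_cons, List.flatten_cons,
      List.head?_append_of_ne_nil _ (by simp [grayN_ne_nil hq])]
    rw [if_pos (show 0 % 2 = 0 from rfl), List.head?_map, ih]
    simp [List.replicate_succ]

lemma grayN_getLast? {q : ℕ} (hq : q % 2 = 1) (n : ℕ) :
    (grayN q n).getLast? = some (List.replicate n (q - 1)) := by
  induction n with
  | zero => simp [grayN]
  | succ n ih =>
    obtain ⟨q', rfl⟩ : ∃ q', q = q' + 1 := ⟨q - 1, by omega⟩
    rw [grayN, List.range_succ, List.map_append, List.flatten_append]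
    rw [List.getLast?_append_of_ne_nil]
    swap
    · simp only [List.map_singleton, List.flatten_cons, List.flatten_nil, List.append_nil]
      split <;> simp [grayN_ne_nil (by omega : 1 ≤ q' + 1)]
    simp only [List.map_singleton, List.flatten_cons, List.flatten_nil, List.append_nil]
    have hq' : q' % 2 = 0 := by omega
    rw [if_pos hq', List.getLast?_map, ih]
    simp [List.replicate_succ]

lemma grayN_chain' (q n : ℕ) :
    List.IsChain (fun u v => hamming u v = 1) (grayN q n) := by
  induction n with
  | zero => simp [grayN]
  | succ n ih =>
    rw [grayN]
    refine (List.isChain_flatten ?_).mpr ⟨?_, ?_⟩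
    · intro hB
      simp only [List.mem_map] at hB
      obtain ⟨i, hi, h⟩ := hB
      rw [List.mem_range] at hi
      have hne : (if i % 2 = 0 then grayN q n else (grayN q n).reverse) ≠ [] := by
        split <;> simp [grayN_ne_nil (by omega : 1 ≤ q)]
      exact hne (List.map_eq_nil_iff.mp h)
    · rintro B hB
      simp only [List.mem_map] at hB
      obtain ⟨i, -, rfl⟩ := hB
      rw [List.isChain_map]
      have hc : List.IsChain (fun u v => hamming u v = 1)
          (if i % 2 = 0 then grayN q n else (grayN q n).reverse) := by
        split
        · exact ih
        · rw [List.isChain_reverse]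
          exact ih.imp (fun a b h => by rw [hamming_comm] at h; exact h)
      refine hc.imp (fun a b h => ?_)
      show hamming (i :: a) (i :: b) = 1
      rw [hamming_cons]; simpa using h
    · rw [List.isChain_map]
      rcases Nat.eq_zero_or_pos q with rfl | hq
      · simp
      obtain ⟨q', rfl⟩ : ∃ q', q = q' + 1 := ⟨q - 1, by omega⟩
      rw [show q' + 1 = Nat.succ q' from rfl, List.isChain_range_succ]
      intro m hm x hx y hy
      rw [List.getLast?_map] at hx
      rw [List.head?_map] at hy
      by_cases hm2 : m % 2 = 0
      · rw [if_pos hm2] at hx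
        rw [if_neg (by omega), List.head?_reverse] at hy
        cases hg : (grayN (q'+1) n).getLast? with
        | none => rw [hg] at hx; simp at hx
        | some t =>
          rw [hg] at hx hy
          simp only [Option.map_some, Option.mem_def, Option.some_inj] at hx hy
          subst hx; subst hy
          rw [hamming_cons, hamming_self, if_neg (by omega)]
      · rw [if_neg hm2, List.getLast?_reverse] at hx
        rw [if_pos (by omega)] at hy
        cases hg : (grayN (q'+1) n).head? with
        | none => rw [hg] at hx; simp at hx
        | some t =>
          rw [hg] at hx hy
          simp only [Option.map_some, Option.mem_def, Option.some_inj] at hx hy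
          subst hx; subst hy
          rw [hamming_cons, hamming_self, if_neg (by omega)]


/-- binary pattern of a word -/
def pat (w : List ℕ) : List ℕ := w.map (fun b => if b = 0 then 0 else 1)

@[simp] lemma length_place (β : List ℕ) : ∀ x, (place β x).length = β.length := by
  induction β with
  | nil => intro x; simp [place]
  | cons b β ih =>
    intro x
    rw [place]
    split <;> simp [ih]

lemma place_replicate {c : ℕ} (hc : c ≠ 0) :
    ∀ β : List ℕ, (∀ b ∈ β, b < 2) →
      place β (List.replicate (β.count 1) c) = β.map (fun b => if b = 0 then 0 else c) := by
  intro β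
  induction β with
  | nil => intro _; simp [place]
  | cons b β ih =>
    intro hβ
    have hb : b < 2 := hβ b (by simp)
    have hβ' : ∀ b ∈ β, b < 2 := fun x hx => hβ x (by simp [hx])
    interval_cases b
    · rw [place, if_pos rfl]
      have : (0 :: β).count 1 = β.count 1 := by simp
      rw [this, ih hβ']
      simp
    · rw [place, if_neg (by omega)]
      have : (1 :: β).count 1 = β.count 1 + 1 := by simp
      rw [this, List.replicate_succ]
      simp only [List.headD_cons, List.tail_cons]
      rw [ih hβ']
      simp [hc]

lemma place_replicate_one (β : List ℕ) (hβ : ∀ b ∈ β, b < 2) :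
    place β (List.replicate (β.count 1) 1) = β := by
  rw [place_replicate one_ne_zero β hβ]
  conv_rhs => rw [← List.map_id β]
  refine List.map_congr_left (fun b hb => ?_)
  have hb2 := hβ b hb
  interval_cases b <;> rfl

lemma hamming_place : ∀ (β : List ℕ), (∀ b ∈ β, b < 2) → ∀ x y : List ℕ,
    x.length = β.count 1 → y.length = β.count 1 →
    hamming (place β x) (place β y) = hamming x y := by
  intro β
  induction β with
  | nil =>
    intro _ x y hx hy
    simp only [List.count_nil] at hx hy
    rw [List.length_eq_zero_iff] at hx hy
    subst hx; subst hy
    rfl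
  | cons b β ih =>
    intro hβ x y hx hy
    have hb : b < 2 := hβ b (by simp)
    have hβ' : ∀ b ∈ β, b < 2 := fun x hx => hβ x (by simp [hx])
    interval_cases b
    · rw [place, if_pos rfl, place, if_pos rfl, hamming_cons]
      rw [List.count_cons_of_ne (by omega : (0:ℕ) ≠ 1)] at hx hy
      rw [ih hβ' x y (by omega) (by omega)]
      simp
    · rw [List.count_cons_self] at hx hy
      cases x with
      | nil => simp at hx
      | cons a x' =>
        cases y with
        | nil => simp at hy
        | cons c y' =>
          rw [place, if_neg (by omega), place, if_neg (by omega)]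
          simp only [List.headD_cons, List.tail_cons]
          rw [hamming_cons, hamming_cons, ih hβ' x' y' (by simpa using hx) (by simpa using hy)]

lemma mem_place : ∀ (β : List ℕ), (∀ b ∈ β, b < 2) → ∀ x : List ℕ,
    x.length = β.count 1 → ∀ a ∈ place β x, a = 0 ∨ a ∈ x := by
  intro β
  induction β with
  | nil => intro _ x _ a ha; simp [place] at ha
  | cons b β ih =>
    intro hβ x hx a ha
    have hb : b < 2 := hβ b (by simp)
    have hβ' : ∀ b ∈ β, b < 2 := fun x hx => hβ x (by simp [hx])
    interval_cases b
    · rw [place, if_pos rfl] at ha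
      rw [List.count_cons_of_ne (by omega : (0:ℕ) ≠ 1)] at hx
      rcases List.mem_cons.mp ha with rfl | ha
      · exact Or.inl rfl
      · exact ih hβ' x (by omega) a ha
    · rw [List.count_cons_self] at hx
      cases x with
      | nil => simp at hx
      | cons c x' =>
        rw [place, if_neg (by omega)] at ha
        simp only [List.headD_cons, List.tail_cons] at ha
        rcases List.mem_cons.mp ha with rfl | ha
        · exact Or.inr (by simp)
        · rcases ih hβ' x' (by simpa using hx) a ha with h | h
          · exact Or.inl h
          · exact Or.inr (by simp [h])

lemma pat_place : ∀ (β : List ℕ), (∀ b ∈ β, b < 2) → ∀ x : List ℕ,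
    x.length = β.count 1 → (∀ a ∈ x, a ≠ 0) → pat (place β x) = β := by
  intro β
  induction β with
  | nil => intro _ x _ _; simp [place, pat]
  | cons b β ih =>
    intro hβ x hx hx0
    have hb : b < 2 := hβ b (by simp)
    have hβ' : ∀ b ∈ β, b < 2 := fun x hx => hβ x (by simp [hx])
    interval_cases b
    · rw [place, if_pos rfl]
      rw [List.count_cons_of_ne (by omega : (0:ℕ) ≠ 1)] at hx
      rw [pat, List.map_cons, ← pat, ih hβ' x (by omega) hx0]
      simp
    · rw [List.count_cons_self] at hx
      cases x with
      | nil => simp at hx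
      | cons c x' =>
        rw [place, if_neg (by omega)]
        simp only [List.headD_cons, List.tail_cons]
        rw [pat, List.map_cons, ← pat,
          ih hβ' x' (by simpa using hx) (fun a ha => hx0 a (by simp [ha]))]
        simp [hx0 c (by simp)]

lemma place_pat_filter : ∀ w : List ℕ,
    place (pat w) (w.filter (fun b => !(b == 0))) = w := by
  intro w
  induction w with
  | nil => simp [pat, place]
  | cons b w ih =>
    by_cases hb : b = 0
    · subst hb
      have hp : pat (0 :: w) = 0 :: pat w := by simp [pat]
      have hf : List.filter (fun b => !(b == 0)) (0 :: w)
          = List.filter (fun b => !(b == 0)) w := by simp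
      rw [hp, hf, place, if_pos rfl, ih]
    · have hp : pat (b :: w) = 1 :: pat w := by simp [pat, hb]
      have hf : List.filter (fun b => !(b == 0)) (b :: w)
          = b :: List.filter (fun b => !(b == 0)) w := by simp [hb]
      rw [hp, hf, place, if_neg one_ne_zero]
      simp [ih]

lemma count_pat (w : List ℕ) :
    (pat w).count 1 = (w.filter (fun b => !(b == 0))).length := by
  induction w with
  | nil => simp [pat]
  | cons b w ih =>
    by_cases hb : b = 0
    · subst hb
      have hp : pat (0 :: w) = 0 :: pat w := by simp [pat]
      have hf : List.filter (fun b => !(b == 0)) (0 :: w)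
          = List.filter (fun b => !(b == 0)) w := by simp
      rw [hp, hf, List.count_cons_of_ne (by omega : (0:ℕ) ≠ 1), ih]
    · have hp : pat (b :: w) = 1 :: pat w := by simp [pat, hb]
      have hf : List.filter (fun b => !(b == 0)) (b :: w)
          = b :: List.filter (fun b => !(b == 0)) w := by simp [hb]
      rw [hp, hf, List.count_cons_self, ih]
      simp

@[simp] lemma length_pat (w : List ℕ) : (pat w).length = w.length := by simp [pat]

lemma pat_lt_two (w : List ℕ) : ∀ b ∈ pat w, b < 2 := by
  intro b hb
  simp only [pat, List.mem_map] at hb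
  obtain ⟨a, -, rfl⟩ := hb
  split <;> omega

lemma infix_pat_iff {k : ℕ} (w : List ℕ) :
    List.replicate k 0 <:+: pat w ↔ List.replicate k 0 <:+: w := by
  constructor
  · rintro ⟨s, t, hst⟩
    have hst' : List.map (fun b => if b = 0 then 0 else 1) w
        = s ++ (List.replicate k 0 ++ t) := by
      rw [← List.append_assoc, hst]; rfl
    obtain ⟨w₁, w₂, rfl, hw₁, hw₂⟩ := List.map_eq_append_iff.mp hst'
    obtain ⟨w₃, w₄, rfl, hw₃, hw₄⟩ := List.map_eq_append_iff.mp hw₂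
    have hw₃' : w₃ = List.replicate k 0 := by
      rw [List.eq_replicate_iff]
      constructor
      · have := congrArg List.length hw₃
        simpa using this
      · intro b hb
        have hmem : (if b = 0 then 0 else 1) ∈ List.replicate k 0 := by
          rw [← hw₃]
          exact List.mem_map_of_mem hb
        have h0 := List.eq_of_mem_replicate hmem
        by_cases hb0 : b = 0
        · exact hb0
        · rw [if_neg hb0] at h0; omega
    refine ⟨w₁, w₄, ?_⟩
    rw [← hw₃', List.append_assoc]
  · intro h
    have := h.map (fun b => if b = 0 then 0 else 1)
    simpa [pat, List.map_replicate] using this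

lemma map_sub_add_one {x : List ℕ} (h : ∀ a ∈ x, a ≠ 0) :
    (x.map (fun a => a - 1)).map (fun a => a + 1) = x := by
  rw [List.map_map]
  conv_rhs => rw [← List.map_id x]
  refine List.map_congr_left (fun a ha => ?_)
  have := h a ha
  simp only [Function.comp_apply, id_eq]
  omega


/-! ### F lemmas -/

lemma F_lt {k n : ℕ} (h : n < k) : F k n = C n := by
  rw [F, dif_pos (Or.inl h)]

lemma F_ge {k n : ℕ} (hk : 1 ≤ k) (h : k ≤ n) :
    F k n = ((List.range k).map (fun j =>
      (F k (n - (j+1))).reverse.map (fun w => List.replicate j 0 ++ 1 :: w))).flatten := by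
  rw [F, dif_neg (by omega)]

lemma binary_decomp : ∀ w : List ℕ, (∀ b ∈ w, b < 2) →
    (∃ j v, w = List.replicate j 0 ++ 1 :: v) ∨ w = List.replicate w.length 0 := by
  intro w
  induction w with
  | nil => intro _; right; rfl
  | cons b w ih =>
    intro hw
    have hb : b < 2 := hw b (by simp)
    interval_cases b
    · rcases ih (fun x hx => hw x (by simp [hx])) with ⟨j, v, rfl⟩ | h
      · exact Or.inl ⟨j+1, v, by rw [List.replicate_succ, List.cons_append]⟩
      · right
        rw [List.length_cons, List.replicate_succ]
        rw [← h]
    · exact Or.inl ⟨0, w, by simp⟩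

lemma rep_le_infix {k n : ℕ} (h : k ≤ n) :
    List.replicate k 0 <:+: List.replicate n (0:ℕ) :=
  ⟨[], List.replicate (n - k) 0, by
    rw [List.nil_append, ← List.replicate_add]
    congr 1
    omega⟩

lemma mem_F {k : ℕ} (hk : 1 ≤ k) : ∀ n (w : List ℕ), w ∈ F k n ↔
    (w.length = n ∧ (∀ b ∈ w, b < 2) ∧ ¬ (List.replicate k 0 <:+: w)) := by
  intro n
  induction n using Nat.strong_induction_on with
  | _ n ih =>
    intro w
    by_cases hn : n < k
    · rw [F_lt hn, mem_C]
      constructor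
      · rintro ⟨h1, h2⟩
        refine ⟨h1, h2, fun hinf => ?_⟩
        have := hinf.length_le
        simp [h1] at this
        omega
      · rintro ⟨h1, h2, -⟩
        exact ⟨h1, h2⟩
    · rw [F_ge hk (by omega), List.mem_flatten]
      constructor
      · rintro ⟨B, hB, hw⟩
        simp only [List.mem_map, List.mem_range] at hB
        obtain ⟨j, hj, rfl⟩ := hB
        simp only [List.mem_map, List.mem_reverse] at hw
        obtain ⟨v, hv, rfl⟩ := hw
        obtain ⟨h1, h2, h3⟩ := (ih (n - (j+1)) (by omega) v).mp hv
        refine ⟨?_, ?_, avoid_block hk v j hj h3⟩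
        · simp only [List.length_append, List.length_replicate, List.length_cons, h1]
          omega
        · intro b hb
          rcases List.mem_append.mp hb with hb | hb
          · have := List.eq_of_mem_replicate hb; omega
          · rcases List.mem_cons.mp hb with rfl | hb
            · omega
            · exact h2 b hb
      · rintro ⟨h1, h2, h3⟩
        rcases binary_decomp w h2 with ⟨j, v, rfl⟩ | h
        · have hj : j < k := by
            by_contra hjk
            exact h3 (((rep_le_infix (by omega : k ≤ j)).trans
              ⟨[], 1 :: v, by simp⟩))
          have hvw : v <:+: List.replicate j 0 ++ 1 :: v :=
            ⟨List.replicate j 0 ++ [1], [], by simp⟩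
          have h1v : v.length = n - (j+1) := by
            simp only [List.length_append, List.length_replicate, List.length_cons] at h1
            omega
          have hv : v ∈ F k (n - (j+1)) := by
            refine (ih (n - (j+1)) (by omega) v).mpr ⟨h1v, ?_, ?_⟩
            · intro b hb
              exact h2 b (by simp [hb])
            · intro hinf
              exact h3 (hinf.trans hvw)
          refine ⟨(F k (n - (j+1))).reverse.map
              (fun w => List.replicate j 0 ++ 1 :: w), ?_, ?_⟩
          · simp only [List.mem_map, List.mem_range]
            exact ⟨j, hj, rfl⟩
          · simp only [List.mem_map, List.mem_reverse]
            exact ⟨v, hv, rfl⟩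
        · exfalso
          rw [h1] at h
          subst h
          exact h3 (rep_le_infix (by omega))

lemma F_ne_nil {k : ℕ} (hk : 1 ≤ k) (n : ℕ) : F k n ≠ [] := by
  refine List.ne_nil_of_mem (a := List.replicate n 1) ((mem_F hk n _).mpr ⟨by simp, ?_, ?_⟩)
  · intro b hb
    have := List.eq_of_mem_replicate hb
    omega
  · intro hinf
    have h0 : (0:ℕ) ∈ List.replicate k 0 := by
      rw [List.mem_replicate]; omega
    have := hinf.subset h0
    have := List.eq_of_mem_replicate this
    omega

lemma rep_one_inj : ∀ (i j : ℕ) (a b : List ℕ),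
    List.replicate i 0 ++ 1 :: a = List.replicate j 0 ++ 1 :: b → i = j ∧ a = b := by
  intro i
  induction i with
  | zero =>
    intro j a b h
    cases j with
    | zero => simpa using h
    | succ j =>
      rw [List.replicate_zero, List.nil_append, List.replicate_succ, List.cons_append] at h
      injection h with h1
      omega
  | succ i ih =>
    intro j a b h
    cases j with
    | zero =>
      rw [List.replicate_zero, List.nil_append, List.replicate_succ, List.cons_append] at h
      injection h with h1
      omega
    | succ j =>
      rw [List.replicate_succ, List.replicate_succ, List.cons_append, List.cons_append] at h
      injection h with h1 h2
      obtain ⟨e1, e2⟩ := ih j a b h2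
      exact ⟨by omega, e2⟩

lemma F_nodup {k : ℕ} (hk : 1 ≤ k) : ∀ n, (F k n).Nodup := by
  intro n
  induction n using Nat.strong_induction_on with
  | _ n ih =>
    by_cases hn : n < k
    · rw [F_lt hn]; exact C_nodup n
    · rw [F_ge hk (by omega), List.nodup_flatten]
      constructor
      · rintro B hB
        simp only [List.mem_map, List.mem_range] at hB
        obtain ⟨j, hj, rfl⟩ := hB
        refine (List.nodup_reverse.mpr (ih _ (by omega))).map ?_
        intro a b h
        simpa using h
      · rw [List.pairwise_map]
        refine (List.pairwise_lt_range (n := k)).imp_of_mem (fun {i j} _ _ hij => ?_)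
        intro w hw hw'
        simp only [List.mem_map, List.mem_reverse] at hw hw'
        obtain ⟨v, -, rfl⟩ := hw
        obtain ⟨v', -, h⟩ := hw'
        obtain ⟨e, -⟩ := rep_one_inj j i v' v h
        omega

lemma F_head? {k : ℕ} (hk : 1 ≤ k) (n : ℕ) :
    (F k (n+1)).head? = Option.map (fun l => 1 :: l) ((F k n).getLast?) := by
  by_cases hn : n + 1 < k
  · rw [F_lt hn, F_lt (by omega), C_head?_succ, C_getLast?]
    rfl
  · rw [F_ge hk (by omega)]
    obtain ⟨k', rfl⟩ : ∃ k', k = k' + 1 := ⟨k - 1, by omega⟩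
    rw [List.range_succ_eq_map, List.map_cons, List.flatten_cons,
      List.head?_append_of_ne_nil _ (by
        simp [F_ne_nil hk])]
    rw [List.head?_map, List.head?_reverse]
    have : n + 1 - (0 + 1) = n := by omega
    rw [this]
    cases (F (k'+1) n).getLast? <;> simp

lemma F_chain' {k : ℕ} (hk : 1 ≤ k) : ∀ n,
    List.IsChain (fun u v => hamming u v = 1) (F k n) := by
  intro n
  induction n using Nat.strong_induction_on with
  | _ n ih =>
    by_cases hn : n < k
    · rw [F_lt hn]; exact C_chain' n
    · rw [F_ge hk (by omega)]
      refine (List.isChain_flatten ?_).mpr ⟨?_, ?_⟩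
      · intro hB
        simp only [List.mem_map, List.mem_range] at hB
        obtain ⟨j, hj, h⟩ := hB
        have := F_ne_nil hk (n - (j+1))
        rw [List.map_eq_nil_iff, List.reverse_eq_nil_iff] at h
        exact this h
      · rintro B hB
        simp only [List.mem_map, List.mem_range] at hB
        obtain ⟨j, hj, rfl⟩ := hB
        rw [List.isChain_map, List.isChain_reverse]
        refine (ih _ (by omega)).imp (fun a b h => ?_)
        show hamming (List.replicate j 0 ++ 1 :: b) (List.replicate j 0 ++ 1 :: a) = 1
        rw [hamming_append_left, hamming_cons, hamming_comm]
        simpa using h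
      · rw [List.isChain_map]
        obtain ⟨k', rfl⟩ : ∃ k', k = k' + 1 := ⟨k - 1, by omega⟩
        rw [show k' + 1 = Nat.succ k' from rfl, List.isChain_range_succ]
        intro m hm x hx y hy
        rw [List.getLast?_map, List.getLast?_reverse] at hx
        rw [List.head?_map, List.head?_reverse] at hy
        have hmn : n - (m+1) = (n - (m+2)) + 1 := by omega
        rw [hmn, F_head? hk] at hx
        cases hg : (F (k'+1) (n - (m+2))).getLast? with
        | none =>
          exact absurd (List.getLast?_eq_none_iff.mp hg) (F_ne_nil hk _)
        | some l =>
          rw [hg] at hx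
          have : n - (m + 1 + 1) = n - (m+2) := by omega
          rw [this, hg] at hy
          simp only [Option.map_some, Option.mem_def, Option.some_inj] at hx hy
          subst hx; subst hy
          rw [List.replicate_succ' (n := m) (a := 0), List.append_assoc]
          rw [hamming_append_left]
          show hamming (1 :: 1 :: l) ([0] ++ 1 :: l) = 1
          rw [List.singleton_append, hamming_cons, hamming_cons, hamming_self]
          simp


/-! ### new material -/

lemma chain'_imp_mem {α : Type*} {R S : α → α → Prop} :
    ∀ {l : List α}, (∀ a ∈ l, ∀ b ∈ l, R a b → S a b) → List.IsChain R l → List.IsChain S l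
  | [], _, _ => List.isChain_nil
  | [a], _, _ => List.isChain_singleton a
  | a :: b :: l, H, h => by
      rw [List.isChain_cons_cons] at h ⊢
      exact ⟨H a (by simp) b (by simp) h.1,
        chain'_imp_mem (fun x hx y hy => H x (by simp [hx]) y (by simp [hy])) h.2⟩

lemma expansion_ne_nil {q : ℕ} (hq2 : 2 ≤ q) (β : List ℕ) : expansion q β ≠ [] := by
  simp [expansion, grayN_ne_nil (by omega : 1 ≤ q - 1)]

lemma chain'_expansion {q : ℕ} (hq2 : 2 ≤ q) {β : List ℕ} (hβ : ∀ b ∈ β, b < 2) :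
    List.IsChain (fun u v => hamming u v = 1) (expansion q β) := by
  rw [expansion, List.isChain_map, List.isChain_map]
  refine chain'_imp_mem ?_ (grayN_chain' (q-1) (β.count 1))
  intro u hu v hv h
  rw [mem_grayN] at hu hv
  show hamming (place β (u.map (· + 1))) (place β (v.map (· + 1))) = 1
  rw [hamming_place β hβ _ _ (by simp [hu.1]) (by simp [hv.1]),
    hamming_map (fun a _ b _ h => by omega)]
  exact h

lemma nodup_expansion {q : ℕ} (hq2 : 2 ≤ q) {β : List ℕ} (hβ : ∀ b ∈ β, b < 2) :
    (expansion q β).Nodup := by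
  rw [expansion]
  refine List.Nodup.map_on ?_
    ((grayN_nodup (q-1) (β.count 1)).map
      (List.map_injective_iff.mpr (fun a b h => by omega)))
  intro x hx y hy hxy
  simp only [List.mem_map] at hx hy
  obtain ⟨u, hu, rfl⟩ := hx
  obtain ⟨v, hv, rfl⟩ := hy
  rw [mem_grayN] at hu hv
  have hl : (u.map (· + 1)).length = (v.map (· + 1)).length := by simp [hu.1, hv.1]
  refine eq_of_hamming_eq_zero hl ?_
  rw [← hamming_place β hβ _ _ (by simp [hu.1]) (by simp [hv.1]), hxy, hamming_self]

lemma head?_expansion {q : ℕ} (hq2 : 2 ≤ q) {β : List ℕ} (hβ : ∀ b ∈ β, b < 2) :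
    (expansion q β).head? = some β := by
  rw [expansion, List.head?_map, List.head?_map, grayN_head? (by omega : 1 ≤ q - 1)]
  simp only [Option.map_some, Option.some_inj, List.map_replicate]
  rw [show (0:ℕ) + 1 = 1 from rfl]
  exact place_replicate_one β hβ

lemma getLast?_expansion {q : ℕ} (hq : Even q) (hq2 : 2 ≤ q) {β : List ℕ}
    (hβ : ∀ b ∈ β, b < 2) :
    (expansion q β).getLast? = some (β.map (fun b => if b = 0 then 0 else q - 1)) := by
  have hodd : (q - 1) % 2 = 1 := by
    obtain ⟨r, rfl⟩ := hq
    omega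
  rw [expansion, List.getLast?_map, List.getLast?_map, grayN_getLast? hodd]
  simp only [Option.map_some, Option.some_inj, List.map_replicate]
  rw [show q - 1 - 1 + 1 = q - 1 by omega]
  exact place_replicate (by omega : q - 1 ≠ 0) β hβ

lemma mem_expansion {q : ℕ} (hq2 : 2 ≤ q) {β w : List ℕ} (hβ : ∀ b ∈ β, b < 2) :
    w ∈ expansion q β ↔ pat w = β ∧ ∀ b ∈ w, b < q := by
  rw [expansion]
  simp only [List.mem_map]
  constructor
  · rintro ⟨x, hx, rfl⟩
    obtain ⟨v, hv, rfl⟩ := hx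
    rw [mem_grayN] at hv
    obtain ⟨hv1, hv2⟩ := hv
    have hxlen : (v.map (· + 1)).length = β.count 1 := by simp [hv1]
    have hx0 : ∀ a ∈ v.map (· + 1), a ≠ 0 := by
      intro a ha
      simp only [List.mem_map] at ha
      obtain ⟨b, -, rfl⟩ := ha
      omega
    refine ⟨pat_place β hβ _ hxlen hx0, ?_⟩
    intro b hb
    rcases mem_place β hβ _ hxlen b hb with rfl | hbx
    · omega
    · simp only [List.mem_map] at hbx
      obtain ⟨c, hc, rfl⟩ := hbx
      have := hv2 c hc
      omega
  · rintro ⟨rfl, hlt⟩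
    have hx0 : ∀ a ∈ w.filter (fun b => !(b == 0)), a ≠ 0 := by
      intro a ha
      simp only [List.mem_filter] at ha
      simpa using ha.2
    refine ⟨w.filter (fun b => !(b == 0)),
      ⟨(w.filter (fun b => !(b == 0))).map (fun a => a - 1), ?_, map_sub_add_one hx0⟩,
      place_pat_filter w⟩
    rw [mem_grayN]
    constructor
    · rw [List.length_map, ← count_pat]
    · intro b hb
      simp only [List.mem_map, List.mem_filter] at hb
      obtain ⟨a, ⟨haw, ha0⟩, rfl⟩ := hb
      have h1 := hlt a haw
      have h2 : a ≠ 0 := by simpa using ha0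
      omega

theorem stmt15_aux (q k n : ℕ) (hq : Even q) (hq2 : 2 ≤ q) (hk : 2 ≤ k) :
    List.IsChain (fun u v => hamming u v = 1) (Feven q k n) ∧
    (Feven q k n).Nodup ∧
    (∀ w : List ℕ, w ∈ Feven q k n ↔
      (w.length = n ∧ (∀ b ∈ w, b < q) ∧ ¬ (List.replicate k 0 <:+: w))) := by
  have hk1 : 1 ≤ k := by omega
  have hβs : ∀ β ∈ F k n, ∀ b ∈ β, b < 2 :=
    fun β hβ => ((mem_F hk1 n β).mp hβ).2.1
  refine ⟨?_, ?_, ?_⟩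
  · -- Chain'
    refine chain'_alt (fun a b h => by rw [hamming_comm]; exact h) ?_ ?_ ?_
    · intro L hL
      simp only [List.mem_map] at hL
      obtain ⟨β, hβ, rfl⟩ := hL
      exact expansion_ne_nil hq2 β
    · intro L hL
      simp only [List.mem_map] at hL
      obtain ⟨β, hβ, rfl⟩ := hL
      exact chain'_expansion hq2 (hβs β hβ)
    · rw [List.isChain_map]
      refine chain'_imp_mem ?_ (F_chain' hk1 n)
      intro β₁ h₁ β₂ h₂ h
      have hb₁ := hβs β₁ h₁
      have hb₂ := hβs β₂ h₂
      constructor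
      · intro x hx y hy
        rw [getLast?_expansion hq hq2 hb₁] at hx
        rw [getLast?_expansion hq hq2 hb₂] at hy
        simp only [Option.mem_def, Option.some_inj] at hx hy
        subst hx; subst hy
        rw [hamming_map]
        · exact h
        · intro a ha b hb hfab
          have := hb₁ a ha
          have := hb₂ b hb
          interval_cases a <;> interval_cases b <;> simp at hfab <;> omega
      · intro x hx y hy
        rw [head?_expansion hq2 hb₁] at hx
        rw [head?_expansion hq2 hb₂] at hy
        simp only [Option.mem_def, Option.some_inj] at hx hy
        subst hx; subst hy
        exact h
  · -- Nodup
    refine nodup_alt ?_ ?_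
    · intro L hL
      simp only [List.mem_map] at hL
      obtain ⟨β, hβ, rfl⟩ := hL
      exact nodup_expansion hq2 (hβs β hβ)
    · rw [List.pairwise_map]
      refine (F_nodup hk1 n).imp_of_mem (fun {β₁ β₂} h₁ h₂ hne => ?_)
      intro w hw hw'
      rw [mem_expansion hq2 (hβs β₁ h₁)] at hw
      rw [mem_expansion hq2 (hβs β₂ h₂)] at hw'
      exact hne (hw.1 ▸ hw'.1.symm ▸ rfl)
  · -- membership
    intro w
    have : w ∈ Feven q k n ↔ ∃ β ∈ F k n, w ∈ expansion q β := by
      rw [Feven, mem_alt]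
      constructor
      · rintro ⟨L, hL, hw⟩
        simp only [List.mem_map] at hL
        obtain ⟨β, hβ, rfl⟩ := hL
        exact ⟨β, hβ, hw⟩
      · rintro ⟨β, hβ, hw⟩
        exact ⟨expansion q β, List.mem_map_of_mem hβ, hw⟩
    rw [this]
    constructor
    · rintro ⟨β, hβ, hw⟩
      obtain ⟨hl, hb2, hav⟩ := (mem_F hk1 n β).mp hβ
      obtain ⟨hpat, hlt⟩ := (mem_expansion hq2 hb2).mp hw
      refine ⟨?_, hlt, ?_⟩
      · rw [← hl, ← hpat, length_pat]
      · intro hinf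
        exact hav (hpat ▸ (infix_pat_iff w).mpr hinf)
    · rintro ⟨hl, hlt, hav⟩
      refine ⟨pat w, ?_, ?_⟩
      · refine (mem_F hk1 n _).mpr ⟨by rw [length_pat, hl], pat_lt_two w, ?_⟩
        intro hinf
        exact hav ((infix_pat_iff w).mp hinf)
      · exact (mem_expansion hq2 (pat_lt_two w)).mpr ⟨rfl, hlt⟩


end GrayAux

/-- For `q ≥ 2` even and `k ≥ 2`, the alternating concatenation of the expansions of
the strings of `F(n,k)` is a Gray code list with Hamming distance `1` for the set of
length-`n` strings over `{0,...,q-1}` avoiding `k` consecutive `0`'s. -/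
theorem stmt15 (q k n : ℕ) (hq : Even q) (hq2 : 2 ≤ q) (hk : 2 ≤ k) :
    List.Chain' (fun u v => hamming u v = 1) (Feven q k n) ∧
    (Feven q k n).Nodup ∧
    (∀ w : List ℕ, w ∈ Feven q k n ↔
      (w.length = n ∧ (∀ b ∈ w, b < q) ∧ ¬ (List.replicate k 0 <:+: w))) :=
  GrayAux.stmt15_aux q k n hq hq2 hk
end
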